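/- Let P ⊆ ℝ be Borel with the property that every nonempty open interval meets both P and its complement in positive Lebesgue measure, and set b(x) = 𝟙_P(x) − 𝟙_{ℝ\P}(x) (so b takes values ±1 and |b| = 1 a.e.). Then the ODE γ'(t) = b(γ(t)) (for a.e. t, γ absolutely continuous) admits no solution on any nondegenerate time interval. -/

import Mathlib

open MeasureTheory Set
open scoped Classical
noncomputable section

open Filter intervalIntegral Metric
open scoped Topology NNReal

lemma bdd_locInt {f : ℝ → ℝ} (hm : Measurable f) (hbd : ∀ x, |f x| ≤ 1) :
    LocallyIntegrable f volume := by
  rw [locallyIntegrable_iff]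
  intro K hK
  exact Integrable.mono' (integrableOn_const (C := (1:ℝ)) hK.measure_lt_top.ne)
    hm.aestronglyMeasurable (Filter.Eventually.of_forall fun x => by
      simpa [Real.norm_eq_abs] using hbd x)

lemma bdd_intervalInt {f : ℝ → ℝ} (hm : Measurable f) (hbd : ∀ x, |f x| ≤ 1) (u v : ℝ) :
    IntervalIntegrable f volume u v := by
  rw [intervalIntegrable_iff]
  exact Integrable.mono' (integrableOn_const (C := (1:ℝ)) measure_Ioc_lt_top.ne)
    hm.aestronglyMeasurable (Filter.Eventually.of_forall fun x => by
      simpa [Real.norm_eq_abs] using hbd x)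

lemma ae_hasDerivAt_primitive {f : ℝ → ℝ} (hm : Measurable f) (hbd : ∀ x, |f x| ≤ 1) :
    ∀ᵐ t, HasDerivAt (fun u => ∫ x in (0:ℝ)..u, f x) (f t) t := by
  filter_upwards [IsUnifLocDoublingMeasure.ae_tendsto_average_norm_sub volume (bdd_locInt hm hbd) 1] with x hx
  have hx' : Tendsto (fun y : ℝ => ⨍ z in closedBall x (dist y x), ‖f z - f x‖) (𝓝[≠] x) (𝓝 0) := by
    apply hx (fun _ => x) (fun y => dist y x)
    · refine tendsto_nhdsWithin_iff.2 ⟨?_, ?_⟩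
      · apply tendsto_nhdsWithin_of_tendsto_nhds
        have := (continuous_id.dist (continuous_const : Continuous fun _ : ℝ => x)).tendsto x
        simpa [dist_self] using this
      · filter_upwards [self_mem_nhdsWithin] with y hy
        simpa [Set.mem_Ioi, dist_pos] using hy
    · filter_upwards with y
      simp only [one_mul, mem_closedBall, dist_self]
      positivity
  rw [hasDerivAt_iff_tendsto_slope]
  have hint : ∀ u v : ℝ, IntervalIntegrable f volume u v := bdd_intervalInt hm hbd
  have key : ∀ y : ℝ, y ≠ x → |slope (fun u => ∫ t in (0:ℝ)..u, f t) x y - f x|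
      ≤ 2 * ⨍ z in closedBall x (dist y x), ‖f z - f x‖ := by
    intro y hy
    have hdy : (0:ℝ) < dist y x := dist_pos.2 hy
    have h1 : (∫ u in (0:ℝ)..y, f u) - (∫ u in (0:ℝ)..x, f u) = ∫ u in x..y, f u := by
      rw [← integral_add_adjacent_intervals (hint 0 x) (hint x y)]; ring
    have e1 : ∫ u in x..y, (f u - f x) = (∫ u in x..y, f u) - (y - x) * f x := by
      rw [intervalIntegral.integral_sub (hint x y) intervalIntegrable_const,
        intervalIntegral.integral_const, smul_eq_mul]
    have hyx : y - x ≠ 0 := sub_ne_zero.2 hy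
    have h2 : slope (fun u => ∫ t in (0:ℝ)..u, f t) x y - f x
        = (∫ u in x..y, (f u - f x)) / (y - x) := by
      rw [slope_def_field, h1, e1]
      field_simp
    have hsub : Set.uIoc x y ⊆ closedBall x (dist y x) := by
      intro z hz
      rw [mem_closedBall, Real.dist_eq, Real.dist_eq]
      rcases Set.mem_uIoc.1 hz with ⟨h1', h2'⟩ | ⟨h1', h2'⟩
      · exact abs_le.2 ⟨by linarith [abs_nonneg (y - x)], by linarith [le_abs_self (y - x)]⟩
      · exact abs_le.2 ⟨by linarith [neg_abs_le (y - x)], by linarith [abs_nonneg (y - x)]⟩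
    have h3 : |∫ u in x..y, (f u - f x)| ≤ ∫ z in closedBall x (dist y x), ‖f z - f x‖ := by
      have step1 : |∫ u in x..y, (f u - f x)| ≤ ∫ u in Set.uIoc x y, ‖f u - f x‖ := by
        simpa [Real.norm_eq_abs] using
          intervalIntegral.norm_integral_le_integral_norm_uIoc
            (f := fun u => f u - f x) (μ := volume) (a := x) (b := y)
      refine step1.trans (setIntegral_mono_set ?_ ?_ hsub.eventuallyLE)
      · exact (((bdd_locInt hm hbd).sub (locallyIntegrable_const _)).integrableOn_isCompact
          (isCompact_closedBall _ _)).norm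
      · exact Filter.Eventually.of_forall fun z => norm_nonneg _
    have hvol : (volume (closedBall x (dist y x))).toReal = 2 * dist y x := by
      rw [Real.volume_closedBall, ENNReal.toReal_ofReal (by positivity)]
    have h4 : ⨍ z in closedBall x (dist y x), ‖f z - f x‖
        = (∫ z in closedBall x (dist y x), ‖f z - f x‖) / (2 * dist y x) := by
      rw [setAverage_eq, measureReal_def, hvol, smul_eq_mul, div_eq_inv_mul]
    have hd : |y - x| = dist y x := by rw [dist_comm, Real.dist_eq, abs_sub_comm]
    rw [h2, h4, abs_div, hd]
    have hre : 2 * ((∫ z in closedBall x (dist y x), ‖f z - f x‖) / (2 * dist y x))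
        = (∫ z in closedBall x (dist y x), ‖f z - f x‖) / dist y x := by
      field_simp
    rw [hre]
    gcongr
  have hsq : Tendsto (fun y => slope (fun u => ∫ t in (0:ℝ)..u, f t) x y - f x) (𝓝[≠] x) (𝓝 0) := by
    apply squeeze_zero_norm' _ (by simpa using hx'.const_mul 2)
    filter_upwards [self_mem_nhdsWithin] with y hy
    simpa [Real.norm_eq_abs] using key y hy
  simpa using tendsto_sub_nhds_zero_iff.1 hsq

lemma expanding_null {g : ℝ → ℝ} {S : Set ℝ}
    (hexp : ∀ s ∈ S, ∀ s' ∈ S, |s - s'| ≤ 2 * |g s - g s'|)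
    {N : Set ℝ} (hN : volume N = 0) (hSN : g '' S ⊆ N) : volume S = 0 := by
  classical
  set T := g '' S with hT
  set v := Function.invFunOn g S with hv
  have hvmem : ∀ y ∈ T, v y ∈ S ∧ g (v y) = y := fun y hy =>
    ⟨Function.invFunOn_mem hy, Function.invFunOn_eq hy⟩
  have hlip : LipschitzOnWith 2 v T := by
    rw [lipschitzOnWith_iff_dist_le_mul]
    intro y hy y' hy'
    obtain ⟨hm, he⟩ := hvmem y hy
    obtain ⟨hm', he'⟩ := hvmem y' hy'
    have := hexp _ hm _ hm'
    rw [he, he'] at this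
    simpa [Real.dist_eq] using this
  have hsub : S ⊆ v '' T := by
    intro s hs
    refine ⟨g s, mem_image_of_mem _ hs, ?_⟩
    obtain ⟨hm, he⟩ := hvmem (g s) (mem_image_of_mem _ hs)
    have := hexp _ hm _ hs
    rw [he] at this
    simp only [sub_self, abs_zero, mul_zero] at this
    have : v (g s) = s := by
      have := abs_nonpos_iff.1 (le_trans (le_of_eq rfl) this)
      linarith [sub_eq_zero.1 this]
    exact this
  refine le_antisymm ?_ zero_le
  calc volume S ≤ volume (v '' T) := measure_mono hsub
    _ = μH[1] (v '' T) := by rw [MeasureTheory.hausdorffMeasure_real]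
    _ ≤ (2:ℝ≥0) ^ (1:ℝ) * μH[1] T := hlip.hausdorffMeasure_image_le zero_le_one
    _ ≤ (2:ℝ≥0) ^ (1:ℝ) * μH[1] N := mul_le_mul_right (measure_mono hSN) _
    _ = (2:ℝ≥0) ^ (1:ℝ) * volume N := by rw [MeasureTheory.hausdorffMeasure_real]
    _ = 0 := by rw [hN, mul_zero]

lemma luzin_null {g : ℝ → ℝ} {d : ℝ → ℝ} (hd : ∀ t, |d t| = 1) {N : Set ℝ}
    (hN : volume N = 0) :
    volume {t : ℝ | HasDerivAt g (d t) t ∧ g t ∈ N} = 0 := by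
  classical
  set E := {t : ℝ | HasDerivAt g (d t) t ∧ g t ∈ N} with hE
  set S : ℕ → ℤ → Set ℝ := fun n k =>
    {t ∈ E | (∀ t', |t' - t| ≤ 1 / (n + 1) → |t' - t| ≤ 2 * |g t' - g t|) ∧
      t ∈ Icc ((k : ℝ) / (n + 1)) ((k + 1) / (n + 1))} with hS
  have hcover : E ⊆ ⋃ (n : ℕ) (k : ℤ), S n k := by
    intro t ht
    obtain ⟨hder, hmem⟩ := ht
    have hlo : (fun t' => g t' - g t - (t' - t) * d t) =o[𝓝 t] fun t' => t' - t := by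
      simpa [hasDerivAt_iff_isLittleO, smul_eq_mul] using hder
    have hev : ∀ᶠ t' in 𝓝 t, ‖g t' - g t - (t' - t) * d t‖ ≤ (1/2) * ‖t' - t‖ :=
      hlo.def (by norm_num)
    obtain ⟨δ, hδ, hball⟩ := Metric.eventually_nhds_iff.1 hev
    obtain ⟨n, hn⟩ := exists_nat_one_div_lt hδ
    have hprop : ∀ t', |t' - t| ≤ 1 / (n + 1) → |t' - t| ≤ 2 * |g t' - g t| := by
      intro t' h'
      have hd' : dist t' t < δ := by
        rw [Real.dist_eq]; exact lt_of_le_of_lt h' hn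
      have := hball hd'
      rw [Real.norm_eq_abs, Real.norm_eq_abs] at this
      have habs : |(t' - t) * d t| = |t' - t| := by
        rw [abs_mul, hd t, mul_one]
      have h5 := abs_sub_abs_le_abs_sub ((t' - t) * d t) (g t' - g t)
      rw [habs, abs_sub_comm ((t' - t) * d t)] at h5
      linarith
    refine mem_iUnion.2 ⟨n, mem_iUnion.2 ⟨⌊t * (n + 1)⌋, ?_⟩⟩
    refine ⟨⟨hder, hmem⟩, hprop, ?_⟩
    have hpos : (0:ℝ) < n + 1 := by positivity
    constructor
    · rw [div_le_iff₀ hpos]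
      exact Int.floor_le _
    · rw [le_div_iff₀ hpos]
      have := (Int.lt_floor_add_one (t * (n + 1))).le
      linarith
  refine measure_mono_null hcover ?_
  rw [measure_iUnion_null_iff]
  intro n
  rw [measure_iUnion_null_iff]
  intro k
  apply expanding_null (g := g) (N := N)
  · intro s hs s' hs'
    have hw : |s - s'| ≤ 1 / (n + 1) := by
      obtain ⟨_, _, hI⟩ := hs
      obtain ⟨_, _, hI'⟩ := hs'
      have heq : ((k:ℝ) + 1) / (n + 1) - (k:ℝ) / (n + 1) = 1 / (n + 1) := by
        field_simp
        ring
      rw [abs_sub_le_iff]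
      constructor <;> linarith [hI.1, hI.2, hI'.1, hI'.2]
    have := hs.2.1 s' (by rwa [abs_sub_comm])
    rw [abs_sub_comm s' s, abs_sub_comm (g s') (g s)] at this
    exact this
  · exact hN
  · rintro y ⟨t, ht, rfl⟩
    exact ht.1.2

lemma seq_quot {F : ℝ → ℝ} {x L : ℝ} (hF : HasDerivAt F L x) :
    Tendsto (fun n : ℕ => (F (x + 1 / (n + 1)) - F x) * (n + 1)) atTop (𝓝 L) := by
  have h1 := hF.tendsto_slope_zero
  have hseq : Tendsto (fun n : ℕ => (1:ℝ) / (n + 1)) atTop (𝓝[≠] (0:ℝ)) := by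
    refine tendsto_nhdsWithin_iff.2 ⟨tendsto_one_div_add_atTop_nhds_zero_nat, ?_⟩
    filter_upwards with n
    simp only [mem_compl_iff, mem_singleton_iff]
    positivity
  have h2 := h1.comp hseq
  refine h2.congr fun n => ?_
  have hpos : (0:ℝ) < (n:ℝ) + 1 := by positivity
  simp only [Function.comp, smul_eq_mul, one_div, inv_inv]
  ring

lemma lipschitz_ae_deriv_one_increment {h : ℝ → ℝ} (hl : LipschitzWith 1 h) {a c : ℝ}
    (hac : a < c) (hd : ∀ᵐ t, t ∈ Ioo a c → HasDerivAt h 1 t) : h c - h a = c - a := by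
  have hcont : Continuous h := hl.continuous
  set d : ℕ → ℝ → ℝ := fun n t => (h (t + 1 / (n + 1)) - h t) * (n + 1) with hdd
  -- DCT
  have hlim : Tendsto (fun n => ∫ t in Ioo a c, d n t) atTop (𝓝 (∫ _ in Ioo a c, (1:ℝ))) := by
    apply tendsto_integral_of_dominated_convergence (fun _ => (1:ℝ))
    · intro n
      exact ((hcont.comp (continuous_id.add continuous_const)).sub hcont).mul
        continuous_const |>.aestronglyMeasurable
    · exact integrableOn_const measure_Ioo_lt_top.ne
    · intro n
      refine (ae_restrict_iff' measurableSet_Ioo).2 (Eventually.of_forall fun t _ => ?_)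
      have hpos : (0:ℝ) < (n:ℝ) + 1 := by positivity
      have hb := hl.dist_le_mul (t + 1 / (n + 1)) t
      rw [Real.dist_eq, Real.dist_eq] at hb
      simp only [NNReal.coe_one, one_mul, add_sub_cancel_left] at hb
      rw [Real.norm_eq_abs, hdd]
      have h1 : |1 / ((n:ℝ) + 1)| = 1 / ((n:ℝ) + 1) := abs_of_pos (by positivity)
      rw [abs_mul, abs_of_pos hpos]
      calc |h (t + 1 / (n + 1)) - h t| * ((n:ℝ) + 1)
          ≤ (1 / ((n:ℝ) + 1)) * ((n:ℝ) + 1) := by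
            rw [h1] at hb
            exact mul_le_mul_of_nonneg_right hb hpos.le
        _ = 1 := by field_simp
    · rw [ae_restrict_iff' measurableSet_Ioo]
      filter_upwards [hd] with t ht htIoo
      exact seq_quot (ht htIoo)
  have hint1 : ∫ _ in Ioo a c, (1:ℝ) = c - a := by
    simp [Real.volume_Ioo, ENNReal.toReal_ofReal (by linarith : (0:ℝ) ≤ c - a), hac.le]
  -- compute the integrals
  have hIcalc : ∀ n : ℕ, ∫ t in Ioo a c, d n t
      = ((∫ t in c..(c + 1/(n+1)), h t) - ∫ t in a..(a + 1/(n+1)), h t) * (n + 1) := by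
    intro n
    set ε : ℝ := 1 / ((n:ℝ) + 1) with hε
    have hii : ∀ u v : ℝ, IntervalIntegrable h volume u v := fun u v =>
      hcont.intervalIntegrable u v
    have hcomp : IntervalIntegrable (fun t => h (t + ε)) volume a c := by
      have := (hii (a + ε) (c + ε)).comp_add_right ε
      simpa using this
    have e0 : ∫ t in Ioo a c, d n t = ∫ t in a..c, (h (t + ε) - h t) * ((n:ℝ) + 1) := by
      rw [intervalIntegral.integral_of_le hac.le, integral_Ioc_eq_integral_Ioo]
    rw [e0, intervalIntegral.integral_mul_const,
      intervalIntegral.integral_sub hcomp (hii a c),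
      intervalIntegral.integral_comp_add_right]
    have h1 := integral_add_adjacent_intervals (hii (a + ε) c) (hii c (c + ε))
    have h2 := integral_add_adjacent_intervals (hii a (a + ε)) (hii (a + ε) c)
    have : ((n:ℝ) + 1) = ((n:ℝ) + 1) := rfl
    congr 1
    linarith
  -- endpoint limits
  have hder_c : HasDerivAt (fun u => ∫ t in c..u, h t) (h c) c :=
    intervalIntegral.integral_hasDerivAt_right (hcont.intervalIntegrable c c)
      (hcont.stronglyMeasurableAtFilter _ _) hcont.continuousAt
  have hder_a : HasDerivAt (fun u => ∫ t in a..u, h t) (h a) a :=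
    intervalIntegral.integral_hasDerivAt_right (hcont.intervalIntegrable a a)
      (hcont.stronglyMeasurableAtFilter _ _) hcont.continuousAt
  have hc0 : (∫ t in c..c, h t) = 0 := intervalIntegral.integral_same
  have ha0 : (∫ t in a..a, h t) = 0 := intervalIntegral.integral_same
  have hlim2 : Tendsto (fun n => ∫ t in Ioo a c, d n t) atTop (𝓝 (h c - h a)) := by
    have t1 := seq_quot hder_c
    have t2 := seq_quot hder_a
    rw [hc0] at t1
    rw [ha0] at t2
    have := t1.sub t2
    apply Tendsto.congr _ this
    intro n
    rw [hIcalc n]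
    ring
  have := tendsto_nhds_unique hlim hlim2
  rw [hint1] at this
  linarith

theorem no_integral_curves
    (P : Set ℝ) (hP : MeasurableSet P)
    (hpos : ∀ a c : ℝ, a < c →
      0 < volume (Ioo a c ∩ P) ∧ 0 < volume (Ioo a c ∩ Pᶜ))
    (b : ℝ → ℝ) (hb : ∀ x, b x = if x ∈ P then 1 else -1) :
    ¬ ∃ (a c : ℝ) (γ : ℝ → ℝ), a < c ∧
      ∀ t ∈ Icc a c, γ t = γ a + ∫ s in a..t, b (γ s) := by
  rintro ⟨a, c, γ, hac, heq⟩
  have hb1 : ∀ x, |b x| = 1 := fun x => by rw [hb x]; split <;> norm_num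
  have hb1' : ∀ x, |b x| ≤ 1 := fun x => (hb1 x).le
  have hbm : Measurable b := by
    have hbe : b = fun x => if x ∈ P then (1:ℝ) else -1 := funext hb
    rw [hbe]; exact Measurable.ite hP measurable_const measurable_const
  set f : ℝ → ℝ := fun u => b (γ u) with hf
  -- Step B : integrability bootstrap
  have hIcc : IntegrableOn f (Ioc a c) volume := by
    set S : Set ℝ := {t | t ∈ Icc a c ∧ IntegrableOn f (Ioc a t) volume} with hS
    have haS : a ∈ S := ⟨⟨le_refl a, hac.le⟩, by simp [IntegrableOn]⟩
    have hSbdd : BddAbove S := ⟨c, fun t ht => ht.1.2⟩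
    set tb := sSup S with htbdef
    have htb_mem : tb ∈ Icc a c :=
      ⟨le_csSup hSbdd haS, csSup_le ⟨a, haS⟩ fun t ht => ht.1.2⟩
    have key1 : ∀ t ∈ Icc a c, t ∉ S → γ t = γ a := by
      intro t ht hnot
      have hni : ¬ IntervalIntegrable f volume a t := by
        rw [intervalIntegrable_iff, uIoc_of_le ht.1]
        exact fun hcon => hnot ⟨ht, hcon⟩
      rw [heq t ht, intervalIntegral.integral_undef hni, add_zero]
    have htbS : tb ∈ S := by
      rcases eq_or_lt_of_le htb_mem.1 with he | hlt
      · rwa [← he]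
      · refine ⟨htb_mem, ?_⟩
        have hIoo : IntegrableOn f (Ioo a tb) volume := by
          set u : ℕ → ℝ := fun n => tb - (tb - a) / (n + 1) with hu
          have huS : ∀ n, u n ∈ S := by
            intro n
            have h1 : u n < tb := by
              have : (0:ℝ) < (tb - a) / (n + 1) := div_pos (by linarith) (by positivity)
              simp only [hu]; linarith
            obtain ⟨s, hsS, hs⟩ := exists_lt_of_lt_csSup ⟨a, haS⟩ h1
            have hua : a ≤ u n := by
              have : (tb - a) / (n + 1) ≤ (tb - a) / 1 := by
                apply div_le_div_of_nonneg_left (by linarith) one_pos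
                push_cast; linarith [Nat.cast_nonneg (α := ℝ) n]
              simp only [hu, div_one] at this ⊢; linarith
            exact ⟨⟨hua, (le_of_lt (lt_of_lt_of_le hs hsS.1.2))⟩,
              hsS.2.mono_set (Ioc_subset_Ioc_right hs.le)⟩
          have hcup : Ioo a tb = ⋃ n, Ioc a (u n) := by
            ext x
            simp only [mem_Ioo, mem_iUnion, mem_Ioc]
            constructor
            · rintro ⟨hx1, hx2⟩
              obtain ⟨n, hn⟩ := exists_nat_one_div_lt (show (0:ℝ) < (tb - x) / (tb - a) by
                apply div_pos <;> linarith)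
              refine ⟨n, hx1, ?_⟩
              rw [div_lt_div_iff₀ (by positivity) (by linarith)] at hn
              have : (tb - a) / (n + 1) < tb - x := by
                rw [div_lt_iff₀ (by positivity)]; push_cast at hn ⊢; nlinarith
              simp only [hu]; linarith
            · rintro ⟨n, hn1, hn2⟩
              refine ⟨hn1, lt_of_le_of_lt hn2 ?_⟩
              have : (0:ℝ) < (tb - a) / (n + 1) := div_pos (by linarith) (by positivity)
              simp only [hu]; linarith
          have hmeas : AEStronglyMeasurable f (volume.restrict (Ioo a tb)) := by
            rw [hcup, aestronglyMeasurable_iUnion_iff]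
            exact fun n => (huS n).2.aestronglyMeasurable
          refine Integrable.mono' (g := fun _ => (1:ℝ))
            (integrableOn_const measure_Ioo_lt_top.ne) hmeas ?_
          exact Eventually.of_forall fun x => by
            rw [Real.norm_eq_abs, hf]; exact hb1' _
        rw [IntegrableOn, ← Measure.restrict_congr_set Ioo_ae_eq_Ioc]
        exact hIoo
    have htbc : tb = c := by
      by_contra hne
      have hlt : tb < c := lt_of_le_of_ne htb_mem.2 hne
      have hconst : ∀ t ∈ Ioc tb c, γ t = γ a := fun t ht =>
        key1 t ⟨htb_mem.1.trans ht.1.le, ht.2⟩ fun hmem =>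
          absurd (le_csSup hSbdd hmem) (not_le.2 ht.1)
      have hint2 : IntegrableOn f (Ioc tb c) volume := by
        refine IntegrableOn.congr_fun (f := fun _ => b (γ a))
          (integrableOn_const measure_Ioc_lt_top.ne) ?_ measurableSet_Ioc
        intro t ht
        simp only [hf, hconst t ht]
      have hcS : c ∈ S := by
        refine ⟨⟨hac.le, le_refl c⟩, ?_⟩
        rw [← Ioc_union_Ioc_eq_Ioc htb_mem.1 hlt.le]
        exact htbS.2.union hint2
      exact absurd (le_csSup hSbdd hcS) (not_le.2 hlt)
    exact htbc ▸ htbS.2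
  have hii : ∀ s ∈ Icc a c, ∀ t ∈ Icc a c, IntervalIntegrable f volume s t := by
    intro s hs t ht
    rw [intervalIntegrable_iff]
    exact hIcc.mono_set (Set.uIoc_subset_uIoc_of_uIcc_subset_uIcc
      (by rw [uIcc_of_le hac.le]; exact uIcc_subset_Icc hs ht) |>.trans
      (by rw [uIoc_of_le hac.le]))
  have haI : a ∈ Icc a c := ⟨le_refl a, hac.le⟩
  have hcI : c ∈ Icc a c := ⟨hac.le, le_refl c⟩
  have hdiff : ∀ s ∈ Icc a c, ∀ t ∈ Icc a c, γ t - γ s = ∫ u in s..t, f u := by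
    intro s hs t ht
    have hadd : (∫ u in a..s, f u) + ∫ u in s..t, f u = ∫ u in a..t, f u :=
      integral_add_adjacent_intervals (hii a haI s hs) (hii s hs t ht)
    have h1 := heq s hs
    have h2 := heq t ht
    rw [h1, h2]
    simp only [← hf] at *
    linarith
  have hlipγ : ∀ s ∈ Icc a c, ∀ t ∈ Icc a c, |γ t - γ s| ≤ |t - s| := by
    intro s hs t ht
    rw [hdiff s hs t ht]
    have := intervalIntegral.norm_integral_le_of_norm_le_const (C := 1) (a := s) (b := t)
      (f := f) fun x _ => by rw [Real.norm_eq_abs, hf]; exact hb1' _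
    rw [Real.norm_eq_abs] at this
    simpa [abs_sub_comm t s] using this
  -- projection and global Lipschitz extension g
  set pr : ℝ → ℝ := fun t => max a (min t c) with hpr
  have hpr_mem : ∀ t, pr t ∈ Icc a c := fun t =>
    ⟨le_max_left _ _, max_le hac.le (min_le_right _ _)⟩
  have hpr_id : ∀ t ∈ Icc a c, pr t = t := by
    intro t ht
    simp only [hpr]
    rw [min_eq_left ht.2, max_eq_right ht.1]
  have hpr_lip : ∀ s t, |pr t - pr s| ≤ |t - s| := by
    intro s t
    simp only [hpr]
    calc |max a (min t c) - max a (min s c)| ≤ |min t c - min s c| := by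
          rw [max_comm a (min t c), max_comm a (min s c)]
          exact abs_max_sub_max_le_abs _ _ _
      _ ≤ |t - s| := by
          refine (abs_min_sub_min_le_max t c s c).trans ?_
          simp [abs_nonneg]
  set g : ℝ → ℝ := fun t => γ (pr t) with hg
  have hg_eq : ∀ t ∈ Icc a c, g t = γ t := fun t ht => by rw [hg]; simp only [hpr_id t ht]
  have hglip : LipschitzWith 1 g := by
    apply LipschitzWith.of_dist_le_mul
    intro s t
    rw [Real.dist_eq, Real.dist_eq, NNReal.coe_one, one_mul]
    calc |g s - g t| ≤ |pr s - pr t| := hlipγ _ (hpr_mem t) _ (hpr_mem s)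
      _ ≤ |s - t| := hpr_lip t s
  have hgcont : Continuous g := hglip.continuous
  set ft : ℝ → ℝ := fun t => b (g t) with hft
  have hft_meas : Measurable ft := by
    have : ft = fun t => if g t ∈ P then (1:ℝ) else -1 := funext fun t => by
      rw [hft]; exact hb _
    rw [this]
    exact Measurable.ite (hgcont.measurable hP) measurable_const measurable_const
  have hft1 : ∀ t, |ft t| = 1 := fun t => hb1 _
  have hft1' : ∀ t, |ft t| ≤ 1 := fun t => (hft1 t).le
  have hftii : ∀ u v : ℝ, IntervalIntegrable ft volume u v := bdd_intervalInt hft_meas hft1'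
  -- increments of g
  have hgdiff : ∀ s ∈ Icc a c, ∀ t ∈ Icc a c, g t - g s = ∫ u in s..t, ft u := by
    intro s hs t ht
    rw [hg_eq s hs, hg_eq t ht, hdiff s hs t ht]
    apply intervalIntegral.integral_congr
    intro u hu
    have huI : u ∈ Icc a c := (uIcc_subset_Icc hs ht) hu
    rw [hf]
    simp only [hft, hg_eq u huI]
  -- derivative of g a.e. on Ioo a c
  set Φ : ℝ → ℝ := fun x => ∫ u in (0:ℝ)..x, ft u with hΦdef
  have hΦ := ae_hasDerivAt_primitive hft_meas hft1'
  have hg_der : ∀ᵐ t, t ∈ Ioo a c → HasDerivAt g (ft t) t := by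
    filter_upwards [hΦ] with t hΦt htIoo
    have hloc : ∀ u ∈ Icc a c, g u = (g a - Φ a) + Φ u := by
      intro u hu
      have h1 := hgdiff a haI u hu
      have h2 : Φ u - Φ a = ∫ x in a..u, ft x := by
        rw [hΦdef]
        simp only
        rw [← integral_add_adjacent_intervals (hftii 0 a) (hftii a u)]
        ring
      linarith
    have hev : (fun u => (g a - Φ a) + Φ u) =ᶠ[𝓝 t] g := by
      filter_upwards [Ioo_mem_nhds htIoo.1 htIoo.2] with u hu
      exact (hloc u (Ioo_subset_Icc_self hu)).symm
    exact (hΦt.const_add (g a - Φ a)).congr_of_eventuallyEq hev.symm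
  -- F and its good points
  set F : ℝ → ℝ := fun x => ∫ u in (0:ℝ)..x, b u with hFdef
  have hbii : ∀ u v : ℝ, IntervalIntegrable b volume u v := bdd_intervalInt hbm hb1'
  have hF := ae_hasDerivAt_primitive hbm hb1'
  set G : Set ℝ := {x | HasDerivAt F (b x) x} with hG
  have hGc : volume Gᶜ = 0 := by
    have hae : ∀ᵐ x : ℝ, x ∈ G := by
      filter_upwards [hF] with x hx
      exact hx
    exact ae_iff.1 hae
  have hbad : volume {t : ℝ | HasDerivAt g (ft t) t ∧ g t ∈ Gᶜ} = 0 :=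
    luzin_null hft1 hGc
  -- chain rule a.e.
  have hcomp : ∀ᵐ t, t ∈ Ioo a c → HasDerivAt (F ∘ g) 1 t := by
    have hbadae : ∀ᵐ t, ¬(HasDerivAt g (ft t) t ∧ g t ∈ Gᶜ) := by
      rw [ae_iff]
      convert hbad using 2
      ext t
      simp
    filter_upwards [hg_der, hbadae] with t h1 h2 ht
    have hgt : HasDerivAt g (ft t) t := h1 ht
    have hmem : g t ∈ G := by
      by_contra hcn
      exact h2 ⟨hgt, hcn⟩
    have hFg : HasDerivAt F (b (g t)) (g t) := hmem
    have hchain := hFg.comp t hgt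
    have hsq : b (g t) * ft t = 1 := by
      rw [hft]
      simp only
      rw [hb (g t)]
      split <;> norm_num
    simpa [hsq] using hchain
  -- F is 1-Lipschitz
  have hFdiff : ∀ x y : ℝ, F y - F x = ∫ u in x..y, b u := by
    intro x y
    rw [hFdef]
    simp only
    rw [← integral_add_adjacent_intervals (hbii 0 x) (hbii x y)]
    ring
  have hFlip : LipschitzWith 1 F := by
    apply LipschitzWith.of_dist_le_mul
    intro x y
    rw [Real.dist_eq, Real.dist_eq, NNReal.coe_one, one_mul]
    rw [show F x - F y = ∫ u in y..x, b u from hFdiff y x]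
    have := intervalIntegral.norm_integral_le_of_norm_le_const (C := 1) (a := y) (b := x)
      (f := b) fun z _ => by rw [Real.norm_eq_abs]; exact hb1' _
    rw [Real.norm_eq_abs] at this
    simpa [abs_sub_comm x y] using this
  have hFg_lip : LipschitzWith 1 (F ∘ g) := by
    have := hFlip.comp hglip
    simpa using this
  have hinc : F (g c) - F (g a) = c - a :=
    lipschitz_ae_deriv_one_increment hFg_lip hac hcomp
  -- strict contraction of F
  have hstrict : ∀ x y : ℝ, x < y → |F y - F x| < y - x := by
    intro x y hxy
    have hIvol : volume (Ioc x y) < ⊤ := measure_Ioc_lt_top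
    have hvolI : (volume (Ioc x y)).toReal = y - x := by
      rw [Real.volume_Ioc, ENNReal.toReal_ofReal (by linarith)]
    have hbint : IntegrableOn b (Ioc x y) volume := by
      have := hbii x y
      rwa [intervalIntegrable_iff, uIoc_of_le hxy.le] at this
    have hFxy : F y - F x = ∫ u in Ioc x y, b u := by
      rw [hFdiff x y, intervalIntegral.integral_of_le hxy.le]
    have haux : ∀ (Q : Set ℝ) (hQ : MeasurableSet Q) (hQpos : 0 < volume (Ioo x y ∩ Q))
        (sgn : ℝ) (hsgn : sgn = 1 ∨ sgn = -1) (hQb : ∀ u ∈ Q, b u = -sgn),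
        ∫ u in Ioc x y, sgn * b u < y - x := by
      intro Q hQ hQpos sgn hsgn hQb
      have hsb_int : IntegrableOn (fun u => 1 - sgn * b u) (Ioc x y) volume := by
        apply Integrable.sub (integrableOn_const (C := (1:ℝ)) hIvol.ne)
        exact (hbint.const_mul sgn)
      have hnonneg : 0 ≤ᵐ[volume.restrict (Ioc x y)] fun u => 1 - sgn * b u := by
        refine Eventually.of_forall fun u => ?_
        have := hb1 u
        rcases hsgn with h | h <;> rw [h] <;> rcases abs_eq (le_of_lt one_pos) |>.1 this with h2 | h2 <;>
          simp [h2] <;> norm_num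
      have hsubint : (∫ u in (Ioc x y ∩ Q), (1 - sgn * b u))
          ≤ ∫ u in Ioc x y, (1 - sgn * b u) := by
        apply setIntegral_mono_set hsb_int hnonneg
        exact HasSubset.Subset.eventuallyLE inter_subset_left
      have hQmeas : MeasurableSet (Ioc x y ∩ Q) := measurableSet_Ioc.inter hQ
      have hconst : (∫ u in (Ioc x y ∩ Q), (1 - sgn * b u))
          = 2 * (volume (Ioc x y ∩ Q)).toReal := by
        rw [setIntegral_congr_fun hQmeas (g := fun _ => (2:ℝ))
          (fun u hu => by rw [hQb u hu.2]; rcases hsgn with h | h <;> rw [h] <;> norm_num)]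
        rw [setIntegral_const, smul_eq_mul, mul_comm, measureReal_def]
      have htop : volume (Ioc x y ∩ Q) < ⊤ :=
        lt_of_le_of_lt (measure_mono inter_subset_left) hIvol
      have hposQ : 0 < volume (Ioc x y ∩ Q) :=
        lt_of_lt_of_le hQpos (measure_mono (inter_subset_inter_left _ Ioo_subset_Ioc_self))
      have htr : 0 < (volume (Ioc x y ∩ Q)).toReal :=
        ENNReal.toReal_pos hposQ.ne' htop.ne
      have hsplit : (∫ u in Ioc x y, (1 - sgn * b u))
          = (y - x) - ∫ u in Ioc x y, sgn * b u := by
        rw [integral_sub (integrableOn_const (C := (1:ℝ)) hIvol.ne) (hbint.const_mul sgn)]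
        rw [setIntegral_const, smul_eq_mul, mul_one, measureReal_def, hvolI]
      have : 0 < (∫ u in Ioc x y, (1 - sgn * b u)) := by
        calc (0:ℝ) < 2 * (volume (Ioc x y ∩ Q)).toReal := by linarith
          _ = _ := hconst.symm
          _ ≤ _ := hsubint
      linarith [hsplit ▸ this]
    have hA : (∫ u in Ioc x y, b u) < y - x := by
      have := haux Pᶜ hP.compl (hpos x y hxy).2 1 (Or.inl rfl)
        (fun u hu => by rw [hb u, if_neg hu])
      simpa using this
    have hB : -(y - x) < ∫ u in Ioc x y, b u := by
      have := haux P hP (hpos x y hxy).1 (-1) (Or.inr rfl)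
        (fun u hu => by rw [hb u, if_pos hu]; norm_num)
      have h2 : (∫ u in Ioc x y, (-1 : ℝ) * b u) = -∫ u in Ioc x y, b u := by
        simp only [neg_one_mul]
        exact MeasureTheory.integral_neg _
      rw [h2] at this
      linarith
    rw [hFxy, abs_lt]
    exact ⟨hB, hA⟩
  -- final contradiction
  have hga : g a = γ a := hg_eq a haI
  have hgc : g c = γ c := hg_eq c hcI
  have hlip_ac : |γ c - γ a| ≤ c - a := by
    have := hlipγ a haI c hcI
    rwa [abs_of_pos (sub_pos.2 hac)] at this
  rcases lt_trichotomy (g a) (g c) with hlt | heqq | hgt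
  · have h1 := hstrict (g a) (g c) hlt
    have h2 : F (g c) - F (g a) ≤ |F (g c) - F (g a)| := le_abs_self _
    have h3 : g c - g a ≤ c - a := by
      rw [hga, hgc]
      calc γ c - γ a ≤ |γ c - γ a| := le_abs_self _
        _ ≤ c - a := hlip_ac
    linarith
  · rw [heqq] at hinc
    simp at hinc
    linarith
  · have h1 := hstrict (g c) (g a) hgt
    have h2 : F (g a) - F (g c) = -(c - a) := by linarith
    rw [h2] at h1
    have h3 : |(-(c - a))| = c - a := by rw [abs_neg, abs_of_pos (by linarith)]
    rw [h3] at h1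
    have h4 : g a - g c ≤ c - a := by
      rw [hga, hgc]
      calc γ a - γ c ≤ |γ c - γ a| := by rw [abs_sub_comm]; exact le_abs_self _
        _ ≤ c - a := hlip_ac
    linarith
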